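/- There is an absolute constant c such that the following holds. Let F be a field, let N ≥ 2, K ≥ 1, D ≥ 1 be integers, let G be an N×K matrix over F, and let C = { G·w : w ∈ F^K } ⊆ F^N be a linear code in which every nonzero codeword has at least D nonzero coordinates. Let m ≥ c · (N/D) · K · log N, and sample S = (s_1, …, s_m) with each s_j independent and uniform in [N]. Then Pr_S[ there exist v_1 ≠ v_2 ∈ C with δ_S(v_1, v_2) ≤ D/(2N) ] ≤ 1/100, where δ_S(v_1, v_2) = |{ j ∈ [m] : v_1(s_j) ≠ v_2(s_j) }| / m. -/

import Mathlib

universe u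

open Finset Matrix


lemma chernoff_count {N : ℕ} (m : ℕ) (T : Finset (Fin N)) (t : ℝ) :
    ((univ.filter (fun S : Fin m → Fin N =>
        (((univ.filter (fun j => S j ∈ T)).card : ℝ)) ≤ t)).card : ℝ)
      ≤ (2:ℝ) ^ t * ((N:ℝ) - (T.card : ℝ)/2) ^ m := by
  set g : Fin N → ℝ := fun i => if i ∈ T then (2:ℝ)⁻¹ else 1 with hg
  have hprod : ∀ S : Fin m → Fin N,
      ∏ j, g (S j) = (2:ℝ)⁻¹ ^ ((univ.filter fun j => S j ∈ T).card) := by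
    intro S
    rw [hg]
    rw [Finset.prod_ite, Finset.prod_const, Finset.prod_const, one_pow, mul_one]
  have hgnonneg : ∀ S : Fin m → Fin N, (0:ℝ) ≤ ∏ j, g (S j) := by
    intro S
    apply Finset.prod_nonneg
    intro j _
    by_cases h : S j ∈ T <;> simp [hg, h] <;> norm_num
  calc ((univ.filter (fun S : Fin m → Fin N =>
        (((univ.filter (fun j => S j ∈ T)).card : ℝ)) ≤ t)).card : ℝ)
      = ∑ S ∈ univ.filter (fun S : Fin m → Fin N =>
          (((univ.filter (fun j => S j ∈ T)).card : ℝ)) ≤ t), (1:ℝ) := by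
        rw [Finset.sum_const]; simp
    _ ≤ ∑ S ∈ univ.filter (fun S : Fin m → Fin N =>
          (((univ.filter (fun j => S j ∈ T)).card : ℝ)) ≤ t),
          (2:ℝ) ^ t * ∏ j, g (S j) := by
        apply Finset.sum_le_sum
        intro S hS
        have hSle : (((univ.filter (fun j => S j ∈ T)).card : ℝ)) ≤ t :=
          (Finset.mem_filter.mp hS).2
        set h := (univ.filter fun j => S j ∈ T).card with hh
        rw [hprod S]
        have h1 : (2:ℝ) ^ (h:ℕ) ≤ (2:ℝ) ^ t := by
          rw [← Real.rpow_natCast 2 h]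
          exact Real.rpow_le_rpow_of_exponent_le (by norm_num) hSle
        have h2 : (2:ℝ)⁻¹ ^ (h:ℕ) = ((2:ℝ) ^ (h:ℕ))⁻¹ := by
          rw [inv_pow]
        rw [h2]
        calc (1:ℝ) = (2:ℝ)^(h:ℕ) * ((2:ℝ)^(h:ℕ))⁻¹ := by
              field_simp
          _ ≤ (2:ℝ) ^ t * ((2:ℝ)^(h:ℕ))⁻¹ := by gcongr
    _ ≤ ∑ S : Fin m → Fin N, (2:ℝ) ^ t * ∏ j, g (S j) := by
        apply Finset.sum_le_sum_of_subset_of_nonneg (Finset.filter_subset _ _)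
        intro S _ _
        have := hgnonneg S
        positivity
    _ = (2:ℝ) ^ t * ∑ S : Fin m → Fin N, ∏ j, g (S j) := by
        rw [← Finset.mul_sum]
    _ = (2:ℝ) ^ t * (∑ i : Fin N, g i) ^ m := by
        congr 1
        rw [← Fin.prod_const m (∑ i : Fin N, g i)]
        rw [Finset.prod_univ_sum (fun _ : Fin m => (univ : Finset (Fin N))) (fun _ i => g i)]
        rw [Fintype.piFinset_univ]
    _ = (2:ℝ) ^ t * ((N:ℝ) - (T.card : ℝ)/2) ^ m := by
        congr 2
        rw [hg]
        rw [Finset.sum_ite, Finset.sum_const, Finset.sum_const]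
        have h1 : (univ.filter (fun i : Fin N => i ∈ T)) = T := by
          ext i; simp
        have h2 : (univ.filter (fun i : Fin N => ¬ i ∈ T)).card = N - T.card := by
          rw [Finset.filter_not, Finset.card_sdiff_of_subset]
          · simp [h1]
          · simp [h1]
        have hTN : T.card ≤ N := by
          simpa using Finset.card_le_card (Finset.subset_univ T)
        rw [h1, h2]
        simp only [nsmul_eq_mul, mul_one]
        rw [Nat.cast_sub hTN]
        ring


lemma exists_small_row_basis {F : Type u} [Field F] {N K : ℕ}
    (G : Matrix (Fin N) (Fin K) F) (w : Fin K → F) :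
    ∃ B : Finset (Fin N), B.card ≤ K ∧ (∀ b ∈ B, G.mulVec w b = 0) ∧
      ∀ w' : Fin K → F, (∀ b ∈ B, G.mulVec w' b = 0) →
        ∀ i : Fin N, G.mulVec w i = 0 → G.mulVec w' i = 0 := by
  classical
  set rows : Fin N → (Fin K → F) := fun i j => G i j with hrows
  set Z : Set (Fin N) := {i | G.mulVec w i = 0} with hZ
  obtain ⟨b, hbs, hspan, hli⟩ := exists_linearIndependent F (rows '' Z)
  have hbfin : b.Finite := hli.setFinite
  have hchoice : ∀ v ∈ hbfin.toFinset, ∃ i : Fin N, i ∈ Z ∧ rows i = v := by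
    intro v hv
    obtain ⟨i, hi, hiv⟩ := hbs (hbfin.mem_toFinset.mp hv)
    exact ⟨i, hi, hiv⟩
  choose pick hpickZ hpickrow using hchoice
  refine ⟨hbfin.toFinset.attach.image (fun x => pick x.1 x.2), ?_, ?_, ?_⟩
  · calc (hbfin.toFinset.attach.image (fun x => pick x.1 x.2)).card
        ≤ hbfin.toFinset.attach.card := card_image_le
      _ = hbfin.toFinset.card := card_attach
      _ ≤ K := by
          have hli' : LinearIndependent F (fun x : hbfin.toFinset => (x : Fin K → F)) := by
            apply hli.comp (fun x : hbfin.toFinset => (⟨x.1, hbfin.mem_toFinset.mp x.2⟩ : b))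
            intro x y hxy
            simp only [Subtype.mk.injEq] at hxy
            exact Subtype.ext hxy
          have := hli'.finset_card_le_finrank
          simpa [Module.finrank_pi] using this
  · intro b' hb'
    obtain ⟨x, _, rfl⟩ := mem_image.mp hb'
    exact hpickZ x.1 x.2
  · intro w' hw' i hi
    let φ : (Fin K → F) →ₗ[F] F :=
      { toFun := fun v => v ⬝ᵥ w'
        map_add' := fun x y => add_dotProduct x y w'
        map_smul' := fun c x => smul_dotProduct c x w' }
    have hbker : b ⊆ (LinearMap.ker φ : Set (Fin K → F)) := by
      intro v hv
      have hvmem : v ∈ hbfin.toFinset := hbfin.mem_toFinset.mpr hv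
      have h1 : pick v hvmem ∈ hbfin.toFinset.attach.image (fun x => pick x.1 x.2) :=
        mem_image.mpr ⟨⟨v, hvmem⟩, mem_attach _ _, rfl⟩
      have h2 : G.mulVec w' (pick v hvmem) = 0 := hw' _ h1
      have h3 : rows (pick v hvmem) ⬝ᵥ w' = 0 := by
        rw [← h2]; rfl
      rw [hpickrow v hvmem] at h3
      simpa [φ, LinearMap.mem_ker] using h3
    have hspanker : Submodule.span F (rows '' Z) ≤ LinearMap.ker φ := by
      rw [← hspan]
      exact Submodule.span_le.mpr hbker
    have hmem : rows i ∈ Submodule.span F (rows '' Z) :=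
      Submodule.subset_span ⟨i, hi, rfl⟩
    have := hspanker hmem
    rw [LinearMap.mem_ker] at this
    have : rows i ⬝ᵥ w' = 0 := this
    rw [← this]; rfl


lemma card_small_subsets {N K : ℕ} (hN : 2 ≤ N) (hK : 1 ≤ K)
    (p : Finset (Fin N) → Prop) [DecidablePred p] (hp : ∀ B, p B → B.card ≤ K) :
    ((univ : Finset (Finset (Fin N))).filter p).card ≤ N ^ (2*K) := by
  have hsub : (univ : Finset (Finset (Fin N))).filter p ⊆
      (range (K+1)).biUnion (fun i => powersetCard i (univ : Finset (Fin N))) := by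
    intro B hB
    refine mem_biUnion.mpr ⟨B.card, ?_, ?_⟩
    · exact mem_range.mpr (Nat.lt_succ_of_le (hp B (mem_filter.mp hB).2))
    · exact mem_powersetCard.mpr ⟨subset_univ B, rfl⟩
  calc ((univ : Finset (Finset (Fin N))).filter p).card
      ≤ ((range (K+1)).biUnion (fun i => powersetCard i (univ : Finset (Fin N)))).card :=
        card_le_card hsub
    _ ≤ ∑ i ∈ range (K+1), (powersetCard i (univ : Finset (Fin N))).card :=
        card_biUnion_le
    _ ≤ ∑ i ∈ range (K+1), N ^ K := by
        apply Finset.sum_le_sum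
        intro i hi
        rw [card_powersetCard, card_univ, Fintype.card_fin]
        have hi' : i ≤ K := by have := mem_range.mp hi; omega
        calc N.choose i ≤ N ^ i := Nat.choose_le_pow N i
          _ ≤ N ^ K := Nat.pow_le_pow_right (by omega) hi'
    _ = (K+1) * N ^ K := by rw [Finset.sum_const, card_range, smul_eq_mul]
    _ ≤ N ^ K * N ^ K := by
        apply Nat.mul_le_mul_right
        calc K + 1 ≤ 2 ^ K := by have := (Nat.lt_two_pow_self (n := K)); omega
          _ ≤ N ^ K := Nat.pow_le_pow_left hN K
    _ = N ^ (2*K) := by rw [← pow_add]; ring_nf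

lemma numeric_bound (N K D : ℕ) (m : ℕ) (hN : 2 ≤ N) (hK : 1 ≤ K) (hD : 1 ≤ D)
    (hDN : D ≤ N)
    (hm : 100 * ((N : ℝ) / (D : ℝ)) * (K : ℝ) * Real.log N ≤ (m : ℝ)) :
    ((N:ℝ)) ^ (2*K) * ((2:ℝ) ^ ((D:ℝ) * m / (2 * (N:ℝ))) * ((N:ℝ) - (D:ℝ)/2) ^ m)
      ≤ (1/100) * (N:ℝ) ^ m := by
  have hn0 : (0:ℝ) < N := by positivity
  have hn2 : (2:ℝ) ≤ N := by exact_mod_cast hN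
  have hd0 : (0:ℝ) < D := by
    have : (0:ℕ) < D := hD
    exact_mod_cast this
  have hdn : (D:ℝ) ≤ N := by exact_mod_cast hDN
  set n : ℝ := (N:ℝ)
  set d : ℝ := (D:ℝ)
  set p : ℝ := d / (2*n) with hp
  have hp0 : 0 < p := by positivity
  have hp2 : p ≤ 1/2 := by
    rw [hp, div_le_iff₀ (by positivity)]
    linarith
  have h1p : (0:ℝ) < 1 - p := by linarith
  have hL : Real.log 2 ≤ K * Real.log n := by
    calc Real.log 2 = 1 * Real.log 2 := (one_mul _).symm
      _ ≤ K * Real.log n := by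
          apply mul_le_mul
          · exact_mod_cast hK
          · exact Real.log_le_log (by norm_num) hn2
          · exact Real.log_nonneg (by norm_num)
          · positivity
  have hlog2lb : (0.6931471803 : ℝ) < Real.log 2 := Real.log_two_gt_d9
  have hlog2ub : Real.log 2 < (0.6931471808 : ℝ) := Real.log_two_lt_d9
  have hpm : 50 * ((K:ℝ) * Real.log n) ≤ p * m := by
    have := mul_le_mul_of_nonneg_left hm (le_of_lt hp0)
    calc 50 * ((K:ℝ) * Real.log n)
        = p * (100 * (n / d) * (K:ℝ) * Real.log n) := by
          rw [hp]; field_simp; ring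
      _ ≤ p * m := this
  have hlog100 : Real.log 100 ≤ 5 := by
    have h100 : (100:ℝ) < Real.exp 5 := by
      have h5 : Real.exp 5 = Real.exp 1 ^ (5:ℕ) := by
        rw [← Real.exp_nat_mul]; norm_num
      have := Real.exp_one_gt_d9
      have hpow : (2.7182818283:ℝ) ^ (5:ℕ) ≤ Real.exp 1 ^ (5:ℕ) :=
        pow_le_pow_left₀ (by norm_num) (le_of_lt this) 5
      have : (100:ℝ) < (2.7182818283:ℝ) ^ (5:ℕ) := by norm_num
      linarith
    have := (Real.log_lt_iff_lt_exp (by norm_num : (0:ℝ) < 100)).mpr h100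
    linarith
  -- rewrite everything with exp
  have hKlogn : (0:ℝ) < K * Real.log n := lt_of_lt_of_le (by linarith) hL
  have e1 : n ^ (2*K) = Real.exp (2*(K:ℝ) * Real.log n) := by
    rw [← Real.exp_log (show (0:ℝ) < n^(2*K) by positivity), Real.log_pow]
    congr 1
    push_cast
    ring
  have e2 : (2:ℝ) ^ (d * m / (2 * n)) = Real.exp (Real.log 2 * (p * m)) := by
    rw [Real.rpow_def_of_pos (by norm_num : (0:ℝ) < 2)]
    congr 1
    rw [hp]; ring
  have e3 : (n - d/2) ^ m = n ^ m * (1-p) ^ m := by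
    rw [← mul_pow]
    congr 1
    rw [hp]; field_simp
  have e4 : (1-p) ^ m ≤ Real.exp ((m:ℝ) * (-p)) := by
    calc (1-p) ^ m ≤ (Real.exp (-p)) ^ m := by
          apply pow_le_pow_left₀ (le_of_lt h1p)
          linarith [Real.add_one_le_exp (-p)]
      _ = Real.exp ((m:ℝ) * (-p)) := (Real.exp_nat_mul _ _).symm
  have hexp : 2*(K:ℝ) * Real.log n + (Real.log 2 * (p*m) + (m:ℝ) * (-p)) ≤ Real.log (1/100) := by
    have hlog1100 : Real.log (1/100) = - Real.log 100 := by
      rw [one_div, Real.log_inv]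
    rw [hlog1100]
    have hpmnonneg : 0 ≤ p * m := by positivity
    nlinarith [hpm, hlog2ub, hlog100, hL, hlog2lb, hKlogn, hpmnonneg]
  calc n ^ (2*K) * ((2:ℝ) ^ (d * m / (2 * n)) * (n - d/2) ^ m)
      = (Real.exp (2*(K:ℝ) * Real.log n) * (Real.exp (Real.log 2 * (p*m)) * (1-p)^m)) * n^m := by
        rw [e1, e2, e3]; ring
    _ ≤ (Real.exp (2*(K:ℝ) * Real.log n) * (Real.exp (Real.log 2 * (p*m)) *
          Real.exp ((m:ℝ) * (-p)))) * n^m := by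
        have h := e4
        have hA : (0:ℝ) ≤ Real.exp (2*(K:ℝ) * Real.log n) := le_of_lt (Real.exp_pos _)
        have hB : (0:ℝ) ≤ Real.exp (Real.log 2 * (p*m)) := le_of_lt (Real.exp_pos _)
        have hn' : (0:ℝ) ≤ n^m := by positivity
        gcongr
    _ = Real.exp (2*(K:ℝ) * Real.log n + (Real.log 2 * (p*m) + (m:ℝ) * (-p))) * n^m := by
        rw [← Real.exp_add, ← Real.exp_add]
    _ ≤ Real.exp (Real.log (1/100)) * n^m := by
        exact mul_le_mul_of_nonneg_right (Real.exp_le_exp.mpr hexp) (by positivity)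
    _ = (1/100) * n^m := by rw [Real.exp_log (by norm_num)]

open scoped Classical in
/-- Random samples preserve the distance of a linear code. There is an
absolute constant `c > 0` such that: for every linear code `C = {G·w : w ∈ F^K} ⊆ F^N` in
which every nonzero codeword has at least `D` nonzero coordinates, if
`m ≥ c·(N/D)·K·log N` and `S = (s_1,…,s_m)` consists of independent uniform indices in `[N]`,
then with probability at least `99/100` no two distinct codewords `v₁ ≠ v₂` satisfy
`δ_S(v₁, v₂) ≤ D/(2N)`, where `δ_S(v₁,v₂) = #{j : v₁(s_j) ≠ v₂(s_j)}/m` (the condition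
`δ_S(v₁,v₂) ≤ D/(2N)` is written as `2·N·#{j : v₁(s_j) ≠ v₂(s_j)} ≤ D·m`). -/
theorem stmt14 : ∃ c : ℝ, 0 < c ∧
    ∀ (F : Type u) [Field F], ∀ (N K D : ℕ), 2 ≤ N → 1 ≤ K → 1 ≤ D →
    ∀ G : Matrix (Fin N) (Fin K) F,
    (∀ w : Fin K → F, G.mulVec w ≠ 0 →
      D ≤ (Finset.univ.filter (fun i : Fin N => G.mulVec w i ≠ 0)).card) →
    ∀ m : ℕ, c * ((N : ℝ) / (D : ℝ)) * (K : ℝ) * Real.log N ≤ (m : ℝ) →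
    ((Finset.univ.filter (fun S : Fin m → Fin N =>
        ∃ w₁ w₂ : Fin K → F, G.mulVec w₁ ≠ G.mulVec w₂ ∧
          2 * N * (Finset.univ.filter
            (fun j : Fin m => G.mulVec w₁ (S j) ≠ G.mulVec w₂ (S j))).card ≤ D * m)).card : ℝ)
      / ((N ^ m : ℕ) : ℝ) ≤ 1 / 100 := by
  refine ⟨100, by norm_num, ?_⟩
  intro F _ N K D hN hK hD G hdist m hm
  by_cases h0 : ∀ w : Fin K → F, G.mulVec w = 0
  · have hempty : (Finset.univ.filter (fun S : Fin m → Fin N =>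
        ∃ w₁ w₂ : Fin K → F, G.mulVec w₁ ≠ G.mulVec w₂ ∧
          2 * N * (Finset.univ.filter
            (fun j : Fin m => G.mulVec w₁ (S j) ≠ G.mulVec w₂ (S j))).card ≤ D * m)) = ∅ := by
      apply Finset.filter_eq_empty_iff.mpr
      rintro S - ⟨w₁, w₂, hne, -⟩
      exact hne (by rw [h0 w₁, h0 w₂])
    rw [hempty]
    norm_num
  · push_neg at h0
    obtain ⟨w0, hw0⟩ := h0
    have hDN : D ≤ N := le_trans (hdist w0 hw0) (by
      simpa using Finset.card_le_card (Finset.subset_univ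
        (Finset.univ.filter (fun i : Fin N => G.mulVec w0 i ≠ 0))))
    have hn0 : (0:ℝ) < N := by positivity
    set t : ℝ := (D:ℝ) * m / (2 * (N:ℝ)) with ht
    set TB : Finset (Fin N) → Finset (Fin N) := fun B =>
      univ.filter (fun i => ∃ w' : Fin K → F,
        (∀ b ∈ B, G.mulVec w' b = 0) ∧ G.mulVec w' i ≠ 0) with hTBdef
    set ℬ : Finset (Finset (Fin N)) :=
      univ.filter (fun B => B.card ≤ K ∧ D ≤ (TB B).card) with hBdef
    set EB : Finset (Fin N) → Finset (Fin m → Fin N) := fun B =>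
      univ.filter (fun S : Fin m → Fin N =>
        (((univ.filter (fun j => S j ∈ TB B)).card : ℝ)) ≤ t) with hEBdef
    have hsub : (Finset.univ.filter (fun S : Fin m → Fin N =>
        ∃ w₁ w₂ : Fin K → F, G.mulVec w₁ ≠ G.mulVec w₂ ∧
          2 * N * (Finset.univ.filter
            (fun j : Fin m => G.mulVec w₁ (S j) ≠ G.mulVec w₂ (S j))).card ≤ D * m))
        ⊆ ℬ.biUnion EB := by
      intro S hS
      obtain ⟨w₁, w₂, hne, hcnt⟩ := (Finset.mem_filter.mp hS).2
      set w : Fin K → F := w₁ - w₂ with hw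
      have hwsub : ∀ i, G.mulVec w i = G.mulVec w₁ i - G.mulVec w₂ i := by
        intro i; rw [hw, Matrix.mulVec_sub]; rfl
      have hwne : G.mulVec w ≠ 0 := by
        intro hcontra
        apply hne
        funext i
        have := congrFun hcontra i
        rw [hwsub i] at this
        simpa [sub_eq_zero] using this
      obtain ⟨B, hBcard, hBZ, hBprop⟩ := exists_small_row_basis G w
      have hTB : TB B = univ.filter (fun i => G.mulVec w i ≠ 0) := by
        ext i
        simp only [hTBdef, Finset.mem_filter, Finset.mem_univ, true_and]
        constructor
        · rintro ⟨w', hw'B, hw'i⟩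
          intro hzero
          exact hw'i (hBprop w' hw'B i hzero)
        · intro hi
          exact ⟨w, hBZ, hi⟩
      have hBmem : B ∈ ℬ := by
        rw [hBdef]
        refine Finset.mem_filter.mpr ⟨Finset.mem_univ _, hBcard, ?_⟩
        rw [hTB]
        exact hdist w hwne
      refine Finset.mem_biUnion.mpr ⟨B, hBmem, ?_⟩
      rw [hEBdef]
      refine Finset.mem_filter.mpr ⟨Finset.mem_univ _, ?_⟩
      have hfe : univ.filter (fun j : Fin m => S j ∈ TB B)
          = univ.filter (fun j : Fin m => G.mulVec w₁ (S j) ≠ G.mulVec w₂ (S j)) := by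
        apply Finset.filter_congr
        intro j _
        rw [hTB]
        simp only [Finset.mem_filter, Finset.mem_univ, true_and]
        rw [hwsub (S j)]
        rw [sub_ne_zero]
      rw [hfe]
      rw [ht, le_div_iff₀ (by positivity)]
      have : ((2 * N * (Finset.univ.filter
          (fun j : Fin m => G.mulVec w₁ (S j) ≠ G.mulVec w₂ (S j))).card : ℕ) : ℝ)
          ≤ ((D * m : ℕ) : ℝ) := by exact_mod_cast hcnt
      push_cast at this ⊢
      linarith
    have hcard1 : ((Finset.univ.filter (fun S : Fin m → Fin N =>
        ∃ w₁ w₂ : Fin K → F, G.mulVec w₁ ≠ G.mulVec w₂ ∧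
          2 * N * (Finset.univ.filter
            (fun j : Fin m => G.mulVec w₁ (S j) ≠ G.mulVec w₂ (S j))).card ≤ D * m)).card : ℝ)
        ≤ ∑ B ∈ ℬ, ((EB B).card : ℝ) := by
      have h1 := Finset.card_le_card hsub
      have h2 := Finset.card_biUnion_le (s := ℬ) (t := EB)
      have := le_trans h1 h2
      exact_mod_cast this
    have hcard2 : ∀ B ∈ ℬ, ((EB B).card : ℝ) ≤ (2:ℝ) ^ t * ((N:ℝ) - (D:ℝ)/2) ^ m := by
      intro B hB
      obtain ⟨-, -, hDle⟩ := Finset.mem_filter.mp (hBdef ▸ hB)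
      calc ((EB B).card : ℝ) ≤ (2:ℝ) ^ t * ((N:ℝ) - ((TB B).card : ℝ)/2) ^ m :=
            chernoff_count m (TB B) t
        _ ≤ (2:ℝ) ^ t * ((N:ℝ) - (D:ℝ)/2) ^ m := by
            have hTBN : ((TB B).card : ℝ) ≤ N := by
              exact_mod_cast (by simpa using Finset.card_le_card (Finset.subset_univ (TB B)))
            have hDel : (D:ℝ) ≤ ((TB B).card : ℝ) := by exact_mod_cast hDle
            have hbase : (0:ℝ) ≤ (N:ℝ) - ((TB B).card : ℝ)/2 := by linarith
            have := pow_le_pow_left₀ hbase (by linarith :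
              (N:ℝ) - ((TB B).card : ℝ)/2 ≤ (N:ℝ) - (D:ℝ)/2) m
            have h2t : (0:ℝ) ≤ (2:ℝ) ^ t := le_of_lt (Real.rpow_pos_of_pos (by norm_num) t)
            exact mul_le_mul_of_nonneg_left this h2t
    have hcard3 : (ℬ.card : ℝ) ≤ ((N:ℝ)) ^ (2*K) := by
      have h' : ℬ.card ≤ N ^ (2*K) := by
        rw [hBdef]
        exact card_small_subsets hN hK (fun B => B.card ≤ K ∧ D ≤ (TB B).card)
          (fun B hB => hB.1)
      calc (ℬ.card : ℝ) ≤ ((N ^ (2*K) : ℕ) : ℝ) := by exact_mod_cast h'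
        _ = ((N:ℝ)) ^ (2*K) := by push_cast; ring
    have hchain : ((Finset.univ.filter (fun S : Fin m → Fin N =>
        ∃ w₁ w₂ : Fin K → F, G.mulVec w₁ ≠ G.mulVec w₂ ∧
          2 * N * (Finset.univ.filter
            (fun j : Fin m => G.mulVec w₁ (S j) ≠ G.mulVec w₂ (S j))).card ≤ D * m)).card : ℝ)
        ≤ ((N:ℝ)) ^ (2*K) * ((2:ℝ) ^ t * ((N:ℝ) - (D:ℝ)/2) ^ m) := by
      calc _ ≤ ∑ B ∈ ℬ, ((EB B).card : ℝ) := hcard1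
        _ ≤ ∑ B ∈ ℬ, (2:ℝ) ^ t * ((N:ℝ) - (D:ℝ)/2) ^ m := Finset.sum_le_sum hcard2
        _ = (ℬ.card : ℝ) * ((2:ℝ) ^ t * ((N:ℝ) - (D:ℝ)/2) ^ m) := by
            rw [Finset.sum_const, nsmul_eq_mul]
        _ ≤ ((N:ℝ)) ^ (2*K) * ((2:ℝ) ^ t * ((N:ℝ) - (D:ℝ)/2) ^ m) := by
            apply mul_le_mul_of_nonneg_right hcard3
            have hDN' : (D:ℝ) ≤ N := by exact_mod_cast hDN
            have h2t : (0:ℝ) ≤ (2:ℝ) ^ t := le_of_lt (Real.rpow_pos_of_pos (by norm_num) t)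
            have : (0:ℝ) ≤ ((N:ℝ) - (D:ℝ)/2) ^ m := by
              apply pow_nonneg; linarith
            positivity
    have hnum := numeric_bound N K D m hN hK hD hDN hm
    rw [ht] at hchain
    rw [div_le_iff₀ (by positivity : (0:ℝ) < ((N ^ m : ℕ) : ℝ))]
    calc _ ≤ ((N:ℝ)) ^ (2*K) * ((2:ℝ) ^ ((D:ℝ) * m / (2 * (N:ℝ))) * ((N:ℝ) - (D:ℝ)/2) ^ m) :=
          hchain
      _ ≤ (1/100) * (N:ℝ) ^ m := hnum
      _ = 1 / 100 * ((N ^ m : ℕ) : ℝ) := by push_cast; ring
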